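/- Let Ψ be a maximal closed subroot system of the untwisted affine root system Φ with Gr(Ψ) = Φ̊. Then there is a prime number q such that {r − r′ : r, r′ ∈ Z_α(Ψ)} = qℤ for every α ∈ Φ̊. -/

import Mathlib

noncomputable section

variable {V : Type*} [NormedAddCommGroup V] [InnerProductSpace ℝ V]

/-- The Cartan pairing `⟨β, α∨⟩ = 2(β,α)/(α,α)`. -/
def cartanPair (α β : V) : ℝ := 2 * (inner ℝ β α : ℝ) / (inner ℝ α α : ℝ)

/-- The reflection `s_α` on `V`: `s_α(β) = β - ⟨β,α∨⟩ α`. -/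
def reflV (α β : V) : V := β - cartanPair α β • α

/-- The affine reflection `s_x` on `V × ℝ` with respect to the bilinear form
`B((x,a),(y,b)) = (x,y)`. -/
def reflA (x y : V × ℝ) : V × ℝ :=
  y - (2 * (inner ℝ y.1 x.1 : ℝ) / (inner ℝ x.1 x.1 : ℝ)) • x

/-- A finite irreducible reduced crystallographic root system in `V`. -/
structure IsIrreducibleRootSystem (R : Set V) : Prop where
  finite : R.Finite
  spans : Submodule.span ℝ R = ⊤
  zero_notMem : (0 : V) ∉ R
  reduced : ∀ α ∈ R, ∀ c : ℝ, c • α ∈ R → c = 1 ∨ c = -1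
  cartan_int : ∀ α ∈ R, ∀ β ∈ R, ∃ n : ℤ, cartanPair α β = (n : ℝ)
  refl_mem : ∀ α ∈ R, ∀ β ∈ R, reflV α β ∈ R
  irred : ∀ A B : Set V, R = A ∪ B → A.Nonempty → B.Nonempty →
    ∃ a ∈ A, ∃ b ∈ B, (inner ℝ a b : ℝ) ≠ 0

/-- A subroot system of a set `Φ` of affine roots: a nonempty proper subset stable
under the reflections `s_x`, `x ∈ Ψ`. -/
def IsSubrootSystem (Φ Ψ : Set (V × ℝ)) : Prop :=
  Ψ.Nonempty ∧ Ψ ⊆ Φ ∧ Ψ ≠ Φ ∧ ∀ x ∈ Ψ, ∀ y ∈ Ψ, reflA x y ∈ Ψ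

/-- `Ψ` is closed in `Φ`. -/
def IsClosedIn (Φ Ψ : Set (V × ℝ)) : Prop := ∀ x ∈ Ψ, ∀ y ∈ Ψ, x + y ∈ Φ → x + y ∈ Ψ

def IsClosedSubrootSystem (Φ Ψ : Set (V × ℝ)) : Prop :=
  IsSubrootSystem Φ Ψ ∧ IsClosedIn Φ Ψ

/-- A maximal closed subroot system of `Φ`: any closed subroot system of `Φ`
containing it equals it. -/
def IsMaximalClosedSubrootSystem (Φ Ψ : Set (V × ℝ)) : Prop :=
  IsClosedSubrootSystem Φ Ψ ∧ ∀ Δ, IsClosedSubrootSystem Φ Δ → Ψ ⊆ Δ → Δ = Ψ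

/-- A subroot system of a finite root system `R`. -/
def IsSubrootSystemF (R S : Set V) : Prop :=
  S.Nonempty ∧ S ⊆ R ∧ S ≠ R ∧ ∀ α ∈ S, ∀ β ∈ S, reflV α β ∈ S

/-- `S` is closed in the finite root system `R`. -/
def IsClosedInF (R S : Set V) : Prop := ∀ α ∈ S, ∀ β ∈ S, α + β ∈ R → α + β ∈ S

def IsMaximalClosedSubrootSystemF (R S : Set V) : Prop :=
  (IsSubrootSystemF R S ∧ IsClosedInF R S) ∧
    ∀ T, IsSubrootSystemF R T → IsClosedInF R T → S ⊆ T → T = S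

/-- A `ℤ`-linear function on `S`: the restriction to `S` of an additive group
homomorphism from the subgroup of `V` generated by `S` to `ℤ`. -/
def IsZLinearOn (S : Set V) (p : V → ℤ) : Prop :=
  ∃ f : AddSubgroup.closure S →+ ℤ,
    ∀ α, ∀ h : α ∈ S, p α = f ⟨α, AddSubgroup.subset_closure h⟩

/-- An irreducible subset: nonempty and not a union of two nonempty mutually
orthogonal subsets. -/
def IsIrreducibleSubset (S : Set V) : Prop :=
  S.Nonempty ∧ ∀ A B : Set V, S = A ∪ B → A.Nonempty → B.Nonempty →
    ∃ a ∈ A, ∃ b ∈ B, (inner ℝ a b : ℝ) ≠ 0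

/-- The untwisted affine root system attached to `R`. -/
def affineRS (R : Set V) : Set (V × ℝ) := {x | x.1 ∈ R ∧ ∃ r : ℤ, x.2 = (r : ℝ)}

/-- The gradient of a set of affine roots. -/
def Gr (Ψ : Set (V × ℝ)) : Set V := {α | ∃ r : ℤ, (α, (r : ℝ)) ∈ Ψ}

/-- `Z_α(Ψ) = {r ∈ ℤ : α + rδ ∈ Ψ}`. -/
def ZSet (Ψ : Set (V × ℝ)) (α : V) : Set ℤ := {r | (α, (r : ℝ)) ∈ Ψ}

/-- The difference set `{r - r' : r, r' ∈ Z_α(Ψ)}`. -/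
def DiffSet (Ψ : Set (V × ℝ)) (α : V) : Set ℤ :=
  {d | ∃ r ∈ ZSet Ψ α, ∃ r' ∈ ZSet Ψ α, d = r - r'}

/-- The lift `Ŝ = {α + rδ : α ∈ S, r ∈ ℤ}` of a subset `S` of the finite root system. -/
def liftF (S : Set V) : Set (V × ℝ) := {x | x.1 ∈ S ∧ ∃ r : ℤ, x.2 = (r : ℝ)}

namespace S2Aux

lemma inner_self_pos' {α : V} (h : α ≠ 0) : (0:ℝ) < inner ℝ α α :=
  lt_of_le_of_ne real_inner_self_nonneg
    (fun h' => h ((inner_self_eq_zero (𝕜 := ℝ)).mp h'.symm))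

lemma inner_self_ne {α : V} (h : α ≠ 0) : (inner ℝ α α : ℝ) ≠ 0 :=
  ne_of_gt (inner_self_pos' h)

lemma cartan_self {α : V} (h : α ≠ 0) : cartanPair α α = 2 := by
  rw [cartanPair, mul_div_assoc, div_self (inner_self_ne h), mul_one]

lemma cartan_neg_right {α : V} (h : α ≠ 0) : cartanPair α (-α) = -2 := by
  rw [cartanPair, inner_neg_left]
  rw [show (2 : ℝ) * -(inner ℝ α α : ℝ) = (-2) * (inner ℝ α α : ℝ) by ring]
  rw [mul_div_assoc, div_self (inner_self_ne h), mul_one]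

lemma reflV_self {α : V} (h : α ≠ 0) : reflV α α = -α := by
  rw [reflV, cartan_self h, two_smul]; abel

lemma reflV_neg {α : V} (h : α ≠ 0) : reflV α (-α) = α := by
  rw [reflV, cartan_neg_right h, neg_smul, sub_neg_eq_add, two_smul]; abel

lemma reflA_pair (α β : V) (r s : ℝ) :
    reflA (α, r) (β, s) = (β - cartanPair α β • α, s - cartanPair α β * r) := by
  show (β, s) - cartanPair α β • (α, r) = _
  rw [Prod.smul_mk, Prod.mk_sub_mk, smul_eq_mul]

section Mem

variable {R : Set V} {Ψ : Set (V × ℝ)}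

lemma refl_Z (hrefl : ∀ x ∈ Ψ, ∀ y ∈ Ψ, reflA x y ∈ Ψ) {α β : V} {r s n : ℤ}
    (hc : cartanPair α β = (n : ℝ)) (hr : r ∈ ZSet Ψ α) (hs : s ∈ ZSet Ψ β) :
    s - n * r ∈ ZSet Ψ (reflV α β) := by
  have h := hrefl _ hr _ hs
  rw [reflA_pair, hc] at h
  show (reflV α β, ((s - n * r : ℤ) : ℝ)) ∈ Ψ
  rw [reflV, hc, show (((s - n * r : ℤ)) : ℝ) = (s : ℝ) - (n : ℝ) * (r : ℝ) by push_cast; ring]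
  exact h

lemma neg_mem_Ψ (hR : IsIrreducibleRootSystem R) (hsub : Ψ ⊆ affineRS R)
    (hrefl : ∀ x ∈ Ψ, ∀ y ∈ Ψ, reflA x y ∈ Ψ) {x : V × ℝ} (hx : x ∈ Ψ) : -x ∈ Ψ := by
  have hα0 : x.1 ≠ 0 := fun h => hR.zero_notMem (h ▸ (hsub hx).1)
  have h := hrefl x hx x hx
  have he : reflA x x = -x := by
    rw [reflA, mul_div_assoc, div_self (inner_self_ne hα0), mul_one, two_smul]
    abel
  rwa [he] at h

lemma neg_Z (hR : IsIrreducibleRootSystem R) (hsub : Ψ ⊆ affineRS R)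
    (hrefl : ∀ x ∈ Ψ, ∀ y ∈ Ψ, reflA x y ∈ Ψ) {α : V} {r : ℤ}
    (hr : r ∈ ZSet Ψ α) : -r ∈ ZSet Ψ (-α) := by
  have h := neg_mem_Ψ hR hsub hrefl hr
  show (-α, ((-r : ℤ) : ℝ)) ∈ Ψ
  rw [show (((-r : ℤ)) : ℝ) = -(r : ℝ) by push_cast; ring, ← Prod.neg_mk]
  exact h

lemma two_stab (hR : IsIrreducibleRootSystem R) (hsub : Ψ ⊆ affineRS R)
    (hrefl : ∀ x ∈ Ψ, ∀ y ∈ Ψ, reflA x y ∈ Ψ) {α : V} {m s s' : ℤ}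
    (hm : m ∈ ZSet Ψ α) (hs : s ∈ ZSet Ψ α) (hs' : s' ∈ ZSet Ψ α) :
    m + 2 * (s - s') ∈ ZSet Ψ α := by
  have hα0 : α ≠ 0 := fun h => hR.zero_notMem (h ▸ (hsub hm).1)
  have hc1 : cartanPair α α = ((2 : ℤ) : ℝ) := by rw [cartan_self hα0]; norm_num
  have h1 := refl_Z hrefl hc1 hs' hm
  rw [reflV_self hα0] at h1
  have hc2 : cartanPair α (-α) = ((-2 : ℤ) : ℝ) := by rw [cartan_neg_right hα0]; norm_num
  have h2 := refl_Z hrefl hc2 hs h1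
  rw [reflV_neg hα0] at h2
  rw [show m + 2 * (s - s') = m - 2 * s' - (-2) * s by ring]
  exact h2

lemma add_Z (hcl : IsClosedIn (affineRS R) Ψ) {α β : V} {r s : ℤ}
    (hαβ : α + β ∈ R) (hr : r ∈ ZSet Ψ α) (hs : s ∈ ZSet Ψ β) :
    r + s ∈ ZSet Ψ (α + β) := by
  have hΦ : ((α, (r : ℝ)) : V × ℝ) + (β, (s : ℝ)) ∈ affineRS R := by
    refine ⟨hαβ, ⟨r + s, ?_⟩⟩
    show (r : ℝ) + (s : ℝ) = _
    push_cast; ring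
  have h := hcl _ hr _ hs hΦ
  show (α + β, ((r + s : ℤ) : ℝ)) ∈ Ψ
  rw [show (((r + s : ℤ)) : ℝ) = (r : ℝ) + (s : ℝ) by push_cast; ring, ← Prod.mk_add_mk]
  exact h

lemma Z_nonempty (hGr : Gr Ψ = R) {α : V} (hα : α ∈ R) : ∃ r : ℤ, r ∈ ZSet Ψ α := by
  have : α ∈ Gr Ψ := by rw [hGr]; exact hα
  exact this

lemma root_string (hR : IsIrreducibleRootSystem R) {α β : V} (hα : α ∈ R) (hβ : β ∈ R)
    (hneg : (inner ℝ α β : ℝ) < 0) (hsum : α + β ≠ 0) : α + β ∈ R := by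
  obtain ⟨n, hn⟩ := hR.cartan_int α hα β hβ
  obtain ⟨m, hm⟩ := hR.cartan_int β hβ α hα
  have hα0 : α ≠ 0 := fun h => hR.zero_notMem (h ▸ hα)
  have hβ0 : β ≠ 0 := fun h => hR.zero_notMem (h ▸ hβ)
  have hip : (0:ℝ) < inner ℝ α α := inner_self_pos' hα0
  have hiq : (0:ℝ) < inner ℝ β β := inner_self_pos' hβ0
  have hball : (inner ℝ β α : ℝ) < 0 := by rwa [real_inner_comm]
  have hnneg : (n : ℝ) < 0 := by
    rw [← hn, cartanPair]; apply div_neg_of_neg_of_pos _ hip; linarith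
  have hmneg : (m : ℝ) < 0 := by
    rw [← hm, cartanPair]; apply div_neg_of_neg_of_pos _ hiq; linarith
  have hn1 : n ≤ -1 := by have : n < 0 := by exact_mod_cast hnneg
                          omega
  have hm1 : m ≤ -1 := by have : m < 0 := by exact_mod_cast hmneg
                          omega
  by_cases hcn : n = -1
  · have h := hR.refl_mem α hα β hβ
    rw [reflV, hn, hcn] at h
    rw [show (((-1 : ℤ)) : ℝ) = -1 by norm_num, neg_smul, one_smul, sub_neg_eq_add] at h
    rwa [add_comm]
  by_cases hcm : m = -1
  · have h := hR.refl_mem β hβ α hα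
    rw [reflV, hm, hcm] at h
    rw [show (((-1 : ℤ)) : ℝ) = -1 by norm_num, neg_smul, one_smul, sub_neg_eq_add] at h
    exact h
  -- now n ≤ -2, m ≤ -2
  have hn2 : n ≤ -2 := by omega
  have hm2 : m ≤ -2 := by omega
  exfalso
  have hprod : (n : ℝ) * (m : ℝ) =
      4 * ((inner ℝ α β : ℝ) * (inner ℝ α β : ℝ)) / ((inner ℝ α α : ℝ) * (inner ℝ β β : ℝ)) := by
    rw [← hn, ← hm, cartanPair, cartanPair, real_inner_comm β α]
    field_simp
    ring
  have hCS := real_inner_mul_inner_self_le α β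
  have h4 : (n : ℝ) * (m : ℝ) ≤ 4 := by
    rw [hprod, div_le_iff₀ (by positivity)]
    nlinarith [hCS]
  have h4' : (4 : ℝ) ≤ (n : ℝ) * (m : ℝ) := by
    have : (4 : ℤ) ≤ n * m := by nlinarith
    exact_mod_cast this
  have heq : (n : ℤ) * m = 4 := by
    have : (n : ℝ) * (m : ℝ) = 4 := le_antisymm h4 h4'
    exact_mod_cast this
  have hnm : n = -2 ∧ m = -2 := by constructor <;> nlinarith
  have e1 : (inner ℝ β α : ℝ) = - inner ℝ α α := by
    have h := hn; rw [hnm.1] at h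
    rw [cartanPair, show (((-2 : ℤ)) : ℝ) = -2 by norm_num] at h
    field_simp at h; linarith
  have e2 : (inner ℝ α β : ℝ) = - inner ℝ β β := by
    have h := hm; rw [hnm.2] at h
    rw [cartanPair, show (((-2 : ℤ)) : ℝ) = -2 by norm_num] at h
    field_simp at h; linarith
  have hz : (inner ℝ (α + β) (α + β) : ℝ) = 0 := by
    rw [real_inner_add_add_self]
    have := real_inner_comm α β
    linarith
  exact hsum ((inner_self_eq_zero (𝕜 := ℝ)).mp hz)

end Mem

section DLemmas

variable {R : Set V} {Ψ : Set (V × ℝ)}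

lemma D_edge (hGr : Gr Ψ = R) (hcl : IsClosedIn (affineRS R) Ψ) {α β : V}
    (hα : α ∈ R) (hαβ : α + β ∈ R) : DiffSet Ψ β ⊆ DiffSet Ψ (α + β) := by
  rintro d ⟨s, hs, s', hs', rfl⟩
  obtain ⟨r, hr⟩ := Z_nonempty hGr hα
  exact ⟨r + s, add_Z hcl hαβ hr hs, r + s', add_Z hcl hαβ hr hs', by ring⟩

lemma D_neg (hR : IsIrreducibleRootSystem R) (hsub : Ψ ⊆ affineRS R)
    (hrefl : ∀ x ∈ Ψ, ∀ y ∈ Ψ, reflA x y ∈ Ψ) (α : V) :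
    DiffSet Ψ (-α) = DiffSet Ψ α := by
  ext d
  constructor
  · rintro ⟨s, hs, s', hs', rfl⟩
    have h1 := neg_Z hR hsub hrefl hs
    have h2 := neg_Z hR hsub hrefl hs'
    rw [neg_neg] at h1 h2
    exact ⟨-s', h2, -s, h1, by ring⟩
  · rintro ⟨s, hs, s', hs', rfl⟩
    exact ⟨-s', neg_Z hR hsub hrefl hs', -s, neg_Z hR hsub hrefl hs, by ring⟩

lemma D_eq_of_sum (hR : IsIrreducibleRootSystem R) (hsub : Ψ ⊆ affineRS R)
    (hrefl : ∀ x ∈ Ψ, ∀ y ∈ Ψ, reflA x y ∈ Ψ) (hcl : IsClosedIn (affineRS R) Ψ)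
    (hGr : Gr Ψ = R) {α β : V} (hα : α ∈ R) (hβ : β ∈ R) (hαβ : α + β ∈ R) :
    DiffSet Ψ α = DiffSet Ψ β := by
  have hα0 : α ≠ 0 := fun h => hR.zero_notMem (h ▸ hα)
  have hβ0 : β ≠ 0 := fun h => hR.zero_notMem (h ▸ hβ)
  have hnα : -α ∈ R := by
    have h := hR.refl_mem α hα α hα; rwa [reflV_self hα0] at h
  have hnβ : -β ∈ R := by
    have h := hR.refl_mem β hβ β hβ; rwa [reflV_self hβ0] at h
  have h1 : DiffSet Ψ α ⊆ DiffSet Ψ (α + β) := by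
    have h := D_edge hGr hcl hβ (show β + α ∈ R by rwa [add_comm])
    rwa [add_comm β α] at h
  have h2 : DiffSet Ψ (α + β) ⊆ DiffSet Ψ β := by
    have e : -α + (α + β) = β := by abel
    have h := D_edge hGr hcl hnα (show -α + (α + β) ∈ R by rw [e]; exact hβ)
    rwa [e] at h
  have h3 : DiffSet Ψ β ⊆ DiffSet Ψ (α + β) := D_edge hGr hcl hα hαβ
  have h4 : DiffSet Ψ (α + β) ⊆ DiffSet Ψ α := by
    have e : -β + (α + β) = α := by abel
    have h := D_edge hGr hcl hnβ (show -β + (α + β) ∈ R by rw [e]; exact hα)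
    rwa [e] at h
  exact subset_antisymm (h1.trans h2) (h3.trans h4)

lemma D_nonorth (hR : IsIrreducibleRootSystem R) (hsub : Ψ ⊆ affineRS R)
    (hrefl : ∀ x ∈ Ψ, ∀ y ∈ Ψ, reflA x y ∈ Ψ) (hcl : IsClosedIn (affineRS R) Ψ)
    (hGr : Gr Ψ = R) {α β : V} (hα : α ∈ R) (hβ : β ∈ R)
    (hip : (inner ℝ α β : ℝ) ≠ 0) : DiffSet Ψ α = DiffSet Ψ β := by
  have hβ0 : β ≠ 0 := fun h => hR.zero_notMem (h ▸ hβ)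
  have hnβ : -β ∈ R := by
    have h := hR.refl_mem β hβ β hβ; rwa [reflV_self hβ0] at h
  by_cases h1 : β = α
  · rw [h1]
  by_cases h2 : β = -α
  · rw [h2]; exact (D_neg hR hsub hrefl α).symm
  rcases lt_or_gt_of_ne hip with hlt | hgt
  · have hs : α + β ∈ R := root_string hR hα hβ hlt
      (fun h => h2 (eq_neg_of_add_eq_zero_right h))
    exact D_eq_of_sum hR hsub hrefl hcl hGr hα hβ hs
  · have hlt' : (inner ℝ α (-β) : ℝ) < 0 := by rw [inner_neg_right]; linarith
    have hs : α + -β ∈ R := root_string hR hα hnβ hlt'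
      (fun h => h1 (by have := eq_neg_of_add_eq_zero_right h; exact neg_injective this))
    have h := D_eq_of_sum hR hsub hrefl hcl hGr hα hnβ hs
    rwa [D_neg hR hsub hrefl] at h

lemma D_const (hR : IsIrreducibleRootSystem R) (hsub : Ψ ⊆ affineRS R)
    (hrefl : ∀ x ∈ Ψ, ∀ y ∈ Ψ, reflA x y ∈ Ψ) (hcl : IsClosedIn (affineRS R) Ψ)
    (hGr : Gr Ψ = R) {α β : V} (hα : α ∈ R) (hβ : β ∈ R) :
    DiffSet Ψ α = DiffSet Ψ β := by
  by_contra hne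
  have hU : R = {γ | γ ∈ R ∧ DiffSet Ψ γ = DiffSet Ψ α} ∪
      {γ | γ ∈ R ∧ DiffSet Ψ γ ≠ DiffSet Ψ α} := by
    ext γ
    constructor
    · intro hγ
      by_cases hD : DiffSet Ψ γ = DiffSet Ψ α
      · exact Or.inl ⟨hγ, hD⟩
      · exact Or.inr ⟨hγ, hD⟩
    · rintro (⟨h, -⟩ | ⟨h, -⟩) <;> exact h
  obtain ⟨a, ⟨haR, haD⟩, b, ⟨hbR, hbD⟩, hab⟩ :=
    hR.irred _ _ hU ⟨α, hα, rfl⟩ ⟨β, hβ, fun h => hne h.symm⟩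
  exact hbD ((D_nonorth hR hsub hrefl hcl hGr haR hbR hab).symm.trans haD)

end DLemmas

section BigInduction

variable {R : Set V} {Ψ : Set (V × ℝ)}

lemma inner_multiset_sum (v : V) (t : Multiset V) :
    ((t.map (fun w => (inner ℝ v w : ℝ))).sum) = (inner ℝ v t.sum : ℝ) := by
  induction t using Multiset.induction with
  | empty => simp
  | cons a s ih => simp [inner_add_right, ih]

lemma sum_mem_NN (hR : IsIrreducibleRootSystem R) (hsub : Ψ ⊆ affineRS R)
    (hrefl : ∀ x ∈ Ψ, ∀ y ∈ Ψ, reflA x y ∈ Ψ) (hcl : IsClosedIn (affineRS R) Ψ) :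
    ∀ (n : ℕ) (s : Multiset (V × ℝ)), Multiset.card s = n → (∀ y ∈ s, y ∈ Ψ) →
      ∀ c : ℤ, s.sum = ((0 : V), (c : ℝ)) →
      c ∈ AddSubgroup.closure (⋃ α ∈ R, DiffSet Ψ α) := by
  classical
  intro n
  induction n using Nat.strong_induction_on with
  | _ n IH =>
  intro s hcard hmem c hsum
  rcases Multiset.empty_or_exists_mem s with hs0 | ⟨x, hx⟩
  · rw [hs0, Multiset.sum_zero] at hsum
    have h2 : (0 : ℝ) = (c : ℝ) := congrArg Prod.snd hsum
    have : c = 0 := by exact_mod_cast h2.symm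
    rw [this]; exact zero_mem _
  · have hxΨ := hmem x hx
    obtain ⟨hx1R, r, hr2⟩ := hsub hxΨ
    set s₁ := s.erase x with hs₁def
    have hs : s = x ::ₘ s₁ := (Multiset.cons_erase hx).symm
    have hfst : (Multiset.map Prod.fst s).sum = (0 : V) := by
      have h := map_multiset_sum (AddMonoidHom.fst V ℝ) s
      rw [hsum] at h
      simpa using h.symm
    have hinnersum : ((s.map (fun y => (inner ℝ x.1 y.1 : ℝ))).sum) = 0 := by
      have he : s.map (fun y => (inner ℝ x.1 y.1 : ℝ)) =
          (s.map Prod.fst).map (fun w => (inner ℝ x.1 w : ℝ)) := by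
        rw [Multiset.map_map]; rfl
      rw [he, inner_multiset_sum, hfst, inner_zero_right]
    rw [hs, Multiset.map_cons, Multiset.sum_cons] at hinnersum
    have hxpos : (0:ℝ) < inner ℝ x.1 x.1 :=
      inner_self_pos' (fun h => hR.zero_notMem (h ▸ hx1R))
    have hexy : ∃ y ∈ s₁, (inner ℝ x.1 y.1 : ℝ) < 0 := by
      by_contra hcon
      push_neg at hcon
      have hnn : (0:ℝ) ≤ ((s₁.map (fun y => (inner ℝ x.1 y.1 : ℝ))).sum) := by
        apply Multiset.sum_nonneg
        rintro z hz
        obtain ⟨y, hy, rfl⟩ := Multiset.mem_map.mp hz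
        exact hcon y hy
      linarith
    obtain ⟨y, hy, hxyneg⟩ := hexy
    have hyΨ := hmem y (Multiset.mem_of_mem_erase hy)
    obtain ⟨hy1R, t, ht2⟩ := hsub hyΨ
    set s₂ := s₁.erase y with hs₂def
    have hs₁ : s₁ = y ::ₘ s₂ := (Multiset.cons_erase hy).symm
    have hc2 : n = Multiset.card s₂ + 2 := by
      rw [← hcard, hs, hs₁]; simp
    have hsum2 : s.sum = x + (y + s₂.sum) := by
      rw [hs, hs₁, Multiset.sum_cons, Multiset.sum_cons]
    have hmem2 : ∀ z ∈ s₂, z ∈ Ψ := fun z hz =>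
      hmem z (Multiset.mem_of_mem_erase (Multiset.mem_of_mem_erase hz))
    have hrZ : r ∈ ZSet Ψ x.1 := by
      show (x.1, (r : ℝ)) ∈ Ψ
      rw [← hr2, Prod.mk.eta]; exact hxΨ
    have htZ : t ∈ ZSet Ψ y.1 := by
      show (y.1, (t : ℝ)) ∈ Ψ
      rw [← ht2, Prod.mk.eta]; exact hyΨ
    by_cases h0 : x.1 + y.1 = 0
    · have hy1 : y.1 = -x.1 := eq_neg_of_add_eq_zero_right h0
      have htZ' : -t ∈ ZSet Ψ x.1 := by
        have h := neg_Z hR hsub hrefl htZ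
        rwa [hy1, neg_neg] at h
      have hdD : r + t ∈ DiffSet Ψ x.1 := ⟨r, hrZ, -t, htZ', by ring⟩
      have hdNN : (r + t : ℤ) ∈ AddSubgroup.closure (⋃ α ∈ R, DiffSet Ψ α) :=
        AddSubgroup.subset_closure (Set.mem_biUnion hx1R hdD)
      have hsum₂ : s₂.sum = ((0 : V), (((c - (r + t) : ℤ)) : ℝ)) := by
        have he : s₂.sum = s.sum - x - y := by rw [hsum2]; abel
        rw [he, hsum, Prod.ext_iff]
        constructor
        · show (0:V) - x.1 - y.1 = 0
          rw [show (0:V) - x.1 - y.1 = -(x.1 + y.1) by abel, h0, neg_zero]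
        · show (c : ℝ) - x.2 - y.2 = _
          rw [hr2, ht2]; push_cast; ring
      have hrec := IH (Multiset.card s₂) (by omega) s₂ rfl hmem2 _ hsum₂
      have h := add_mem hrec hdNN
      simpa using h
    · have hsumR : x.1 + y.1 ∈ R := root_string hR hx1R hy1R hxyneg h0
      have hxyΦ : x + y ∈ affineRS R := by
        refine ⟨hsumR, ⟨r + t, ?_⟩⟩
        show x.2 + y.2 = _
        rw [hr2, ht2]; push_cast; ring
      have hxyΨ : x + y ∈ Ψ := hcl x hxΨ y hyΨ hxyΦ
      have hmem3 : ∀ z ∈ (x + y) ::ₘ s₂, z ∈ Ψ := by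
        intro z hz
        rcases Multiset.mem_cons.mp hz with rfl | hz'
        · exact hxyΨ
        · exact hmem2 z hz'
      have hsum3 : ((x + y) ::ₘ s₂).sum = ((0 : V), (c : ℝ)) := by
        rw [Multiset.sum_cons, ← hsum, hsum2]; abel
      exact IH (Multiset.card s₂ + 1) (by omega) _ (by simp) hmem3 c hsum3

end BigInduction

section Main

theorem statement2'
    {V : Type*} [NormedAddCommGroup V] [InnerProductSpace ℝ V]
    (R : Set V) (hR : IsIrreducibleRootSystem R)
    (Ψ : Set (V × ℝ))
    (hΨcl : IsSubrootSystem (affineRS R) Ψ ∧ IsClosedIn (affineRS R) Ψ)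
    (hmax : ∀ Δ, (IsSubrootSystem (affineRS R) Δ ∧ IsClosedIn (affineRS R) Δ) → Ψ ⊆ Δ → Δ = Ψ)
    (hGr : Gr Ψ = R) :
    ∃ q : ℕ, q.Prime ∧ ∀ α ∈ R, DiffSet Ψ α = {d : ℤ | (q : ℤ) ∣ d} := by
  obtain ⟨⟨hne, hsub, hneq, hrefl⟩, hcl⟩ := hΨcl
  -- the ℤ-span of Ψ and the associated subgroup of ℤ
  set M : AddSubgroup (V × ℝ) := AddSubgroup.closure Ψ with hM
  set ι : ℤ →+ V × ℝ := ((0 : ℤ →+ V).prod (Int.castAddHom ℝ)) with hι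
  have hιdef : ∀ r : ℤ, ι r = ((0 : V), (r : ℝ)) := fun r => rfl
  set K : AddSubgroup ℤ := M.comap ι with hK
  have hpair_sub : ∀ (a : V) (u v : ℤ),
      ((a, (u : ℝ)) : V × ℝ) - (a, (v : ℝ)) = ι (u - v) := by
    intro a u v
    rw [hιdef, Prod.mk_sub_mk, Prod.ext_iff]
    constructor
    · show a - a = 0; rw [sub_self]
    · show (u : ℝ) - (v : ℝ) = _; push_cast; ring
  have hpair_add : ∀ (a : V) (u v : ℤ),
      ((a, (u : ℝ)) : V × ℝ) + ι v = (a, ((u + v : ℤ) : ℝ)) := by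
    intro a u v
    rw [hιdef, Prod.mk_add_mk, Prod.ext_iff]
    constructor
    · show a + 0 = a; rw [add_zero]
    · show (u : ℝ) + (v : ℝ) = _; push_cast; ring
  obtain ⟨x₀, hx₀⟩ := hne
  obtain ⟨hα₀R, r₀, hr₀⟩ := hsub hx₀
  have hx₀eq : ((x₀.1, (r₀ : ℝ)) : V × ℝ) = x₀ := by rw [← hr₀, Prod.mk.eta]
  have hr₀Z : r₀ ∈ ZSet Ψ x₀.1 := by
    show (x₀.1, (r₀ : ℝ)) ∈ Ψ; rw [hx₀eq]; exact hx₀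
  by_cases hKtop : K = ⊤
  · -- then Ψ = affineRS R, contradicting properness
    exfalso
    -- K ≤ closure of the union of difference sets
    have hKNN : K ≤ AddSubgroup.closure (⋃ α ∈ R, DiffSet Ψ α) := by
      intro c hc
      have hcM : ι c ∈ AddSubgroup.closure Ψ := hc
      have hms : ∃ s : Multiset (V × ℝ), (∀ y ∈ s, y ∈ Ψ) ∧ s.sum = ι c := by
        refine AddSubgroup.closure_induction
          (p := fun z _ => ∃ s : Multiset (V × ℝ), (∀ y ∈ s, y ∈ Ψ) ∧ s.sum = z)
          ?_ ?_ ?_ ?_ hcM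
        · exact fun w hw => ⟨{w}, by simpa using hw, by simp⟩
        · exact ⟨0, by simp, by simp⟩
        · rintro a b _ _ ⟨sa, hsa, rfl⟩ ⟨sb, hsb, rfl⟩
          refine ⟨sa + sb, ?_, by rw [Multiset.sum_add]⟩
          intro y hy
          rcases Multiset.mem_add.mp hy with h | h
          exacts [hsa y h, hsb y h]
        · rintro a _ ⟨sa, hsa, rfl⟩
          refine ⟨sa.map (fun z => -z), ?_, ?_⟩
          · intro y hy
            obtain ⟨w, hw, rfl⟩ := Multiset.mem_map.mp hy
            exact neg_mem_Ψ hR hsub hrefl (hsa w hw)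
          · rw [Multiset.sum_map_neg']
      obtain ⟨s, hsmem, hssum⟩ := hms
      exact sum_mem_NN hR hsub hrefl hcl (Multiset.card s) s rfl hsmem c
        (by rw [hssum, hιdef])
    have hZall : ∀ α ∈ R, ∀ m : ℤ, m ∈ ZSet Ψ α := by
      intro α hα
      have hDtop : AddSubgroup.closure (DiffSet Ψ α) = ⊤ := by
        apply top_unique
        calc (⊤ : AddSubgroup ℤ) = K := hKtop.symm
          _ ≤ AddSubgroup.closure (⋃ β ∈ R, DiffSet Ψ β) := hKNN
          _ ≤ AddSubgroup.closure (DiffSet Ψ α) := by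
              apply AddSubgroup.closure_le _ |>.mpr
              rintro d hd
              obtain ⟨β, hβ, hdβ⟩ := Set.mem_iUnion₂.mp hd
              rw [D_const hR hsub hrefl hcl hGr hβ hα] at hdβ
              exact AddSubgroup.subset_closure hdβ
      -- the stabilizer subgroup of Z_α
      set H : AddSubgroup ℤ :=
        { carrier := {h | ∀ m ∈ ZSet Ψ α, m + h ∈ ZSet Ψ α ∧ m - h ∈ ZSet Ψ α}
          zero_mem' := by
            intro m hm
            constructor <;> simpa using hm
          add_mem' := by
            intro a b ha hb m hm
            constructor
            · rw [show m + (a + b) = m + a + b by ring]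
              exact (hb _ (ha m hm).1).1
            · rw [show m - (a + b) = m - a - b by ring]
              exact (hb _ (ha m hm).2).2
          neg_mem' := by
            intro a ha m hm
            constructor
            · rw [show m + -a = m - a by ring]
              exact (ha m hm).2
            · rw [show m - -a = m + a by ring]
              exact (ha m hm).1 } with hH
      have hsubH : ∀ d ∈ DiffSet Ψ α, 2 * d ∈ H := by
        rintro d ⟨s, hs, s', hs', rfl⟩
        intro m hm
        constructor
        · exact two_stab hR hsub hrefl hm hs hs'
        · rw [show m - 2 * (s - s') = m + 2 * (s' - s) by ring]
          exact two_stab hR hsub hrefl hm hs' hs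
      have hmapH : ∀ k : ℤ, (2 * k) ∈ H := by
        intro k
        have hk : k ∈ AddSubgroup.closure (DiffSet Ψ α) := by
          rw [hDtop]; trivial
        set f : ℤ →+ ℤ := AddMonoidHom.mk' (fun x => 2 * x) (fun a b => by ring) with hf
        have h1 : f k ∈ AddSubgroup.map f (AddSubgroup.closure (DiffSet Ψ α)) :=
          AddSubgroup.mem_map_of_mem f hk
        rw [AddMonoidHom.map_closure] at h1
        have hle : AddSubgroup.closure (f '' DiffSet Ψ α) ≤ H := by
          apply AddSubgroup.closure_le _ |>.mpr
          rintro z ⟨d, hd, rfl⟩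
          exact hsubH d hd
        exact hle h1
      -- an odd difference exists
      have hodd : ∃ r₁ ∈ ZSet Ψ α, ∃ r₂ ∈ ZSet Ψ α, ¬ ((2:ℤ) ∣ (r₁ - r₂)) := by
        by_contra hcon
        push_neg at hcon
        have hle2 : AddSubgroup.closure (DiffSet Ψ α) ≤ AddSubgroup.zmultiples (2:ℤ) := by
          apply AddSubgroup.closure_le _ |>.mpr
          rintro d ⟨s, hs, s', hs', rfl⟩
          exact Int.mem_zmultiples_iff.mpr (hcon s hs s' hs')
        have h1 : (1:ℤ) ∈ AddSubgroup.zmultiples (2:ℤ) := by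
          apply hle2; rw [hDtop]; trivial
        have := Int.mem_zmultiples_iff.mp h1
        omega
      obtain ⟨r₁, hr₁, r₂, hr₂, hodd2⟩ := hodd
      intro m
      by_cases hpar : (2:ℤ) ∣ (m - r₁)
      · obtain ⟨k, hk⟩ := hpar
        have he : m = r₁ + 2 * k := by omega
        rw [he]
        exact ((hmapH k) r₁ hr₁).1
      · have hpar2 : (2:ℤ) ∣ (m - r₂) := by omega
        obtain ⟨k, hk⟩ := hpar2
        have he : m = r₂ + 2 * k := by omega
        rw [he]
        exact ((hmapH k) r₂ hr₂).1
    apply hneq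
    apply Set.Subset.antisymm hsub
    rintro z ⟨hz1, rz, hz2⟩
    have h := hZall z.1 hz1 rz
    have h' : ((z.1, (rz : ℝ)) : V × ℝ) ∈ Ψ := h
    have he : ((z.1, (rz : ℝ)) : V × ℝ) = z := by rw [← hz2, Prod.mk.eta]
    rwa [he] at h'
  · -- K is proper; Ψ is cut out by M, and K is maximal proper, hence prime
    have hDD : ∀ M' : AddSubgroup (V × ℝ), Ψ ⊆ ↑M' →
        (affineRS R ∩ ↑M' : Set (V × ℝ)) ≠ affineRS R →
        (affineRS R ∩ ↑M' : Set (V × ℝ)) = Ψ := by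
      intro M' hΨM' hneq'
      apply hmax
      · constructor
        · refine ⟨⟨x₀, hsub hx₀, hΨM' hx₀⟩, Set.inter_subset_left, hneq', ?_⟩
          rintro x ⟨hxΦ, hxM⟩ y ⟨hyΦ, hyM⟩
          obtain ⟨hx1, rx, hx2⟩ := hxΦ
          obtain ⟨hy1, ry, hy2⟩ := hyΦ
          obtain ⟨nn, hnn⟩ := hR.cartan_int x.1 hx1 y.1 hy1
          have hformula : reflA x y = y - ((nn : ℝ)) • x := by
            show y - cartanPair x.1 y.1 • x = _
            rw [hnn]
          refine ⟨⟨?_, ⟨ry - nn * rx, ?_⟩⟩, ?_⟩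
          · rw [hformula]
            show y.1 - ((nn : ℝ)) • x.1 ∈ R
            have h := hR.refl_mem x.1 hx1 y.1 hy1
            rwa [reflV, hnn] at h
          · rw [hformula]
            show y.2 - ((nn : ℝ)) • x.2 = _
            rw [hx2, hy2, smul_eq_mul]; push_cast; ring
          · rw [hformula, Int.cast_smul_eq_zsmul]
            exact sub_mem hyM (zsmul_mem hxM nn)
        · rintro x ⟨hxΦ, hxM⟩ y ⟨hyΦ, hyM⟩ hxyΦ
          exact ⟨hxyΦ, add_mem hxM hyM⟩
      · exact fun z hz => ⟨hsub hz, hΨM' hz⟩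
    have hMne : (affineRS R ∩ ↑M : Set (V × ℝ)) ≠ affineRS R := by
      intro heq
      apply hKtop
      rw [AddSubgroup.eq_top_iff']
      intro k
      have h1 : ((x₀.1, ((r₀ + k : ℤ) : ℝ)) : V × ℝ) ∈ affineRS R := ⟨hα₀R, ⟨r₀ + k, rfl⟩⟩
      rw [← heq] at h1
      obtain ⟨-, h1M⟩ := h1
      have h0 : (x₀ : V × ℝ) ∈ M := AddSubgroup.subset_closure hx₀
      have he : ι k = ((x₀.1, ((r₀ + k : ℤ) : ℝ)) : V × ℝ) - x₀ := by
        rw [← hx₀eq, hpair_sub]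
        exact congrArg (fun z : ℤ => ι z) (by ring)
      show ι k ∈ M
      rw [he]
      exact sub_mem h1M h0
    have hΨM : (affineRS R ∩ ↑M : Set (V × ℝ)) = Ψ :=
      hDD M (fun z hz => AddSubgroup.subset_closure hz) hMne
    have hcoset : ∀ α ∈ R, ∀ r r' : ℤ, r ∈ ZSet Ψ α →
        (r' ∈ ZSet Ψ α ↔ r' - r ∈ K) := by
      intro α hα r r' hr
      constructor
      · intro hr'
        show ι (r' - r) ∈ M
        rw [← hpair_sub]
        exact sub_mem (AddSubgroup.subset_closure hr') (AddSubgroup.subset_closure hr)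
      · intro hk
        have hmem' : ((α, (r' : ℝ)) : V × ℝ) ∈ (affineRS R ∩ ↑M : Set (V × ℝ)) := by
          refine ⟨⟨hα, r', rfl⟩, ?_⟩
          have he : ((α, (r' : ℝ)) : V × ℝ) = ι (r' - r) + (α, (r : ℝ)) := by
            rw [add_comm, hpair_add]
            exact congrArg (fun z : ℤ => ((α, (z : ℝ)) : V × ℝ)) (by ring)
          rw [he]
          exact add_mem hk (AddSubgroup.subset_closure hr)
        rw [hΨM] at hmem'
        exact hmem'
    have hKmax : ∀ K' : AddSubgroup ℤ, K ≤ K' → K' ≠ ⊤ → K' = K := by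
      intro K' hKK' hK'ne
      obtain ⟨t, ht⟩ : ∃ t : ℤ, t ∉ K' := by
        by_contra h
        push_neg at h
        exact hK'ne ((AddSubgroup.eq_top_iff' K').mpr h)
      have hne' : (affineRS R ∩ ↑(M ⊔ AddSubgroup.map ι K') : Set (V × ℝ)) ≠ affineRS R := by
        intro heq
        apply ht
        have h1 : ((x₀.1, ((r₀ + t : ℤ) : ℝ)) : V × ℝ) ∈ affineRS R := ⟨hα₀R, ⟨r₀ + t, rfl⟩⟩
        rw [← heq] at h1
        obtain ⟨-, h1M⟩ := h1
        obtain ⟨a, haM, b, hbK, hab⟩ := AddSubgroup.mem_sup.mp h1M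
        obtain ⟨kk, hkkK', hkkb⟩ := hbK
        have haM' : ((x₀.1, ((r₀ + t - kk : ℤ) : ℝ)) : V × ℝ) ∈ M := by
          have he : ((x₀.1, ((r₀ + t - kk : ℤ) : ℝ)) : V × ℝ) =
              ((x₀.1, ((r₀ + t : ℤ) : ℝ)) : V × ℝ) - ι kk := by
            have e2 : ((x₀.1, ((r₀ + t : ℤ) : ℝ)) : V × ℝ) - ι kk
                = ((x₀.1, ((r₀ + t : ℤ) : ℝ)) : V × ℝ) + ι (-kk) := by
              rw [sub_eq_add_neg, ← map_neg]
            rw [e2, hpair_add]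
            exact congrArg (fun z : ℤ => ((x₀.1, (z : ℝ)) : V × ℝ)) (by ring)
          rw [he, ← hab, ← hkkb]
          simpa using haM
        have hz : (r₀ + t - kk) ∈ ZSet Ψ x₀.1 := by
          have hmem' : ((x₀.1, ((r₀ + t - kk : ℤ) : ℝ)) : V × ℝ)
              ∈ (affineRS R ∩ ↑M : Set (V × ℝ)) := ⟨⟨hα₀R, _, rfl⟩, haM'⟩
          rw [hΨM] at hmem'
          exact hmem'
        have hK1 : (r₀ + t - kk) - r₀ ∈ K := (hcoset x₀.1 hα₀R r₀ _ hr₀Z).mp hz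
        have htk : t - kk ∈ K' := hKK' (by rwa [show (r₀ + t - kk) - r₀ = t - kk by ring] at hK1)
        rw [show t = (t - kk) + kk by ring]
        exact add_mem htk hkkK'
      have hΔ' := hDD (M ⊔ AddSubgroup.map ι K')
        (fun z hz => (le_sup_left : M ≤ M ⊔ AddSubgroup.map ι K') (AddSubgroup.subset_closure hz))
        hne'
      apply le_antisymm _ hKK'
      intro k hkK'
      have hzk : r₀ + k ∈ ZSet Ψ x₀.1 := by
        have hmem' : ((x₀.1, ((r₀ + k : ℤ) : ℝ)) : V × ℝ)
            ∈ (affineRS R ∩ ↑(M ⊔ AddSubgroup.map ι K') : Set (V × ℝ)) := by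
          refine ⟨⟨hα₀R, _, rfl⟩, ?_⟩
          rw [← hpair_add x₀.1 r₀ k, hx₀eq]
          exact add_mem ((le_sup_left : M ≤ _) (AddSubgroup.subset_closure hx₀))
            ((le_sup_right : AddSubgroup.map ι K' ≤ _) (AddSubgroup.mem_map_of_mem ι hkK'))
        rw [hΔ'] at hmem'
        exact hmem'
      have h := (hcoset x₀.1 hα₀R r₀ _ hr₀Z).mp hzk
      simpa using h
    -- K is cyclic generated by a prime
    obtain ⟨g, hg⟩ := Int.subgroup_cyclic K
    have hKdvd : ∀ r : ℤ, r ∈ K ↔ g ∣ r := by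
      intro r
      rw [hg, AddSubgroup.mem_closure_singleton]
      constructor
      · rintro ⟨nz, rfl⟩; exact ⟨nz, by simp [zsmul_eq_mul, mul_comm]⟩
      · rintro ⟨cz, rfl⟩; exact ⟨cz, by simp [zsmul_eq_mul, mul_comm]⟩
    have hqdvd : ∀ r : ℤ, r ∈ K ↔ ((g.natAbs : ℤ)) ∣ r := by
      intro r; rw [hKdvd r]; exact (Int.natAbs_dvd).symm
    have hq1 : g.natAbs ≠ 1 := by
      intro h1
      apply hKtop
      rw [AddSubgroup.eq_top_iff']
      intro r
      rw [hqdvd, h1]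
      exact one_dvd r
    have hq0 : g.natAbs ≠ 0 := by
      intro h0
      have hle : K ≤ AddSubgroup.zmultiples (2:ℤ) := by
        intro r hr
        rw [hqdvd, h0] at hr
        have : r = 0 := by exact_mod_cast (zero_dvd_iff.mp (by exact_mod_cast hr))
        rw [this]; exact zero_mem _
      have h2ne : AddSubgroup.zmultiples (2:ℤ) ≠ ⊤ := by
        intro h
        have h1 : (1:ℤ) ∈ AddSubgroup.zmultiples (2:ℤ) := by rw [h]; trivial
        have := Int.mem_zmultiples_iff.mp h1
        omega
      have heqK := hKmax _ hle h2ne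
      have h2K : (2:ℤ) ∈ K := by rw [← heqK]; exact Int.mem_zmultiples_iff.mpr dvd_rfl
      rw [hqdvd, h0] at h2K
      norm_num at h2K
    have hp : (g.natAbs.minFac).Prime := Nat.minFac_prime hq1
    have hple : K ≤ AddSubgroup.zmultiples ((g.natAbs.minFac : ℤ)) := by
      intro r hr
      rw [hqdvd] at hr
      exact Int.mem_zmultiples_iff.mpr
        (dvd_trans (Int.natCast_dvd_natCast.mpr (Nat.minFac_dvd _)) hr)
    have hpne : AddSubgroup.zmultiples ((g.natAbs.minFac : ℤ)) ≠ ⊤ := by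
      intro h
      have h1 : (1:ℤ) ∈ AddSubgroup.zmultiples ((g.natAbs.minFac : ℤ)) := by rw [h]; trivial
      have hdd := Int.mem_zmultiples_iff.mp h1
      have hle1 : ((g.natAbs.minFac : ℤ)) ≤ 1 := Int.le_of_dvd one_pos hdd
      have := hp.two_le
      have : ((2:ℕ) : ℤ) ≤ ((g.natAbs.minFac : ℕ) : ℤ) := by exact_mod_cast this
      omega
    have hpK := hKmax _ hple hpne
    have hqp : g.natAbs = g.natAbs.minFac := by
      have hpmem : ((g.natAbs.minFac : ℤ)) ∈ K := by
        rw [← hpK]; exact Int.mem_zmultiples_iff.mpr dvd_rfl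
      rw [hqdvd] at hpmem
      have hdvd : g.natAbs ∣ g.natAbs.minFac := Int.natCast_dvd_natCast.mp hpmem
      rcases (Nat.Prime.eq_one_or_self_of_dvd hp _ hdvd) with h | h
      · exact absurd h hq1
      · exact h
    refine ⟨g.natAbs, by rw [hqp]; exact hp, ?_⟩
    intro α hα
    obtain ⟨rα, hrα⟩ := Z_nonempty hGr hα
    ext d
    simp only [Set.mem_setOf_eq]
    constructor
    · rintro ⟨r, hr, r', hr', rfl⟩
      have h := (hcoset α hα r' r hr').mp hr
      exact (hqdvd _).mp h
    · intro hdq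
      have hdK : d ∈ K := (hqdvd d).mpr hdq
      have hz : rα + d ∈ ZSet Ψ α := by
        apply (hcoset α hα rα (rα + d) hrα).mpr
        simpa using hdK
      exact ⟨rα + d, hz, rα, hrα, by ring⟩

end Main

end S2Aux

/-- For a maximal closed subroot system `Ψ` of the untwisted affine
root system with `Gr(Ψ) = Φ̊`, there is a prime `q` with
`{r − r' : r, r' ∈ Z_α(Ψ)} = qℤ` for every `α ∈ Φ̊`. -/
theorem statement2
    {V : Type*} [NormedAddCommGroup V] [InnerProductSpace ℝ V] [FiniteDimensional ℝ V]
    (R : Set V) (hR : IsIrreducibleRootSystem R)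
    (Ψ : Set (V × ℝ)) (hΨ : IsMaximalClosedSubrootSystem (affineRS R) Ψ)
    (hGr : Gr Ψ = R) :
    ∃ q : ℕ, q.Prime ∧ ∀ α ∈ R, DiffSet Ψ α = {d : ℤ | (q : ℤ) ∣ d} := by
  exact S2Aux.statement2' R hR Ψ hΨ.1 hΨ.2 hGr
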